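/- arXiv:2007.15552 — 2 statements merged into one kernel-verified Lean document; each statement's English description precedes it below -/
import Mathlib

section
/- Let T^1 = KR_right(S,A)^1 for a finite semigroup S generated by a finite alphabet A, and let D be the Lyndon–Chiswell length function on T^1. For all α, β, γ ∈ T^1, D(α, γ) ≥ min(D(α, β), D(β, γ)) (the isoperimetric inequality). -/
open scoped Classical

namespace KRHolonomy

/-- Green's quasi-order `≤_J` on a monoid: `a ≤_J b` iff `a ∈ M b M`. -/
def leJ {M : Type*} [Monoid M] (a b : M) : Prop := ∃ x y : M, a = x * b * y

/-- `a <_J b` iff `a ≤_J b` and not `b ≤_J a`. -/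
def ltJ {M : Type*} [Monoid M] (a b : M) : Prop := leJ a b ∧ ¬ leJ b a

/-- Green's quasi-order `≤_R` on a monoid: `a ≤_R b` iff `a ∈ b M`. -/
def leR {M : Type*} [Monoid M] (a b : M) : Prop := ∃ x : M, a = b * x

/-- `a <_R b` iff `a ≤_R b` and not `b ≤_R a`. -/
def ltR {M : Type*} [Monoid M] (a b : M) : Prop := leR a b ∧ ¬ leR b a

/-- Green's quasi-order `≤_L` on a monoid: `a ≤_L b` iff `a ∈ M b`. -/
def leL {M : Type*} [Monoid M] (a b : M) : Prop := ∃ x : M, a = x * b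

/-- `a <_L b` iff `a ≤_L b` and not `b ≤_L a`. -/
def ltL {M : Type*} [Monoid M] (a b : M) : Prop := leL a b ∧ ¬ leL b a

/-- The Dedekind height function: `height x` is the largest `k` such that there is a chain
`x₀ >_J x₁ >_J ⋯ >_J x_k = x`. -/
noncomputable def height {M : Type*} [Monoid M] (x : M) : ℕ :=
  sSup {k | ∃ c : ℕ → M, c k = x ∧ ∀ i < k, ltJ (c (i + 1)) (c i)}

variable {A S : Type*} [Semigroup S]

/-- The edge `(s, a, s·θ(a))` of the right Cayley graph of `(S,A)` is a transition edge:
there is no path in the right Cayley graph from `s·θ(a)` back to `s`. -/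
def IsTransitionEdge (θ : FreeMonoid A →* WithOne S) (s : WithOne S) (a : A) : Prop :=
  ¬ ∃ w : FreeMonoid A, s * θ (FreeMonoid.of a) * θ w = s

/-- The (ordered) sequence of transition edges along the path of the right Cayley graph
starting at `s` and reading the word `u`; an edge is recorded as a pair (source, label). -/
noncomputable def transEdgesFrom (θ : FreeMonoid A →* WithOne S) :
    WithOne S → List A → List (WithOne S × A)
  | _, [] => []
  | s, a :: w =>
      (if IsTransitionEdge θ s a then [(s, a)] else []) ++
        transEdgesFrom θ (s * θ (FreeMonoid.of a)) w

/-- The sequence of transition edges of the path starting at `1` reading `u`. -/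
noncomputable def transEdges (θ : FreeMonoid A →* WithOne S) (u : FreeMonoid A) :
    List (WithOne S × A) :=
  transEdgesFrom θ 1 (FreeMonoid.toList u)

/-- The congruence (`τ_r`, together with `(1,1)`) defining the right Karnofsky–Rhodes
expansion: two words of `A^*` represent the same element of `KR_right(S,A)¹` iff they are
both empty or both nonempty, they have the same image in `S¹` and the same sequence of
transition edges. -/
def KRrel (θ : FreeMonoid A →* WithOne S) (u v : FreeMonoid A) : Prop :=
  (u = 1 ∧ v = 1) ∨
    (u ≠ 1 ∧ v ≠ 1 ∧ θ u = θ v ∧ transEdges θ u = transEdges θ v)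

/-- Green's quasi-order `≤_J` on `T¹ = KR_right(S,A)¹`, expressed on word representatives:
`u ≤_J v` iff `u = p v q` holds in `T¹` for some `p, q ∈ T¹`. -/
def leJT (θ : FreeMonoid A →* WithOne S) (u v : FreeMonoid A) : Prop :=
  ∃ p q : FreeMonoid A, KRrel θ u (p * v * q)

/-- `<_J` on `T¹ = KR_right(S,A)¹`, expressed on word representatives. -/
def ltJT (θ : FreeMonoid A →* WithOne S) (u v : FreeMonoid A) : Prop :=
  leJT θ u v ∧ ¬ leJT θ v u

/-- The Dedekind height function on `T¹ = KR_right(S,A)¹`, expressed on word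
representatives: the largest `k` such that there is a chain
`t₀ >_J t₁ >_J ⋯ >_J t_k = t` in `T¹`. -/
noncomputable def heightT (θ : FreeMonoid A →* WithOne S) (u : FreeMonoid A) : ℕ :=
  sSup {k | ∃ c : ℕ → FreeMonoid A, KRrel θ (c k) u ∧ ∀ i < k, ltJT θ (c (i + 1)) (c i)}

/-- `ℓ = 2 · max { h(s) : s ∈ S¹ }`. -/
noncomputable def ell (S : Type*) [Semigroup S] : ℕ :=
  2 * sSup (Set.range fun s : WithOne S => height s)

/-- `ξ(u,v)`: the largest `i` (with `0 ≤ i ≤ m`, `m` the number of transition edges of `u`)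
such that the first `i` transition edges of `u` and of `v` agree. -/
noncomputable def xi (θ : FreeMonoid A →* WithOne S) (u v : FreeMonoid A) : ℕ :=
  sSup {i | i ≤ (transEdges θ u).length ∧
    (transEdges θ u).take i = (transEdges θ v).take i}

/-- The endpoint of an edge `(s, a)` of the right Cayley graph, namely `s·θ(a)`. -/
def edgeEnd (θ : FreeMonoid A →* WithOne S) (e : WithOne S × A) : WithOne S :=
  e.1 * θ (FreeMonoid.of e.2)

/-- The Lyndon–Chiswell length function `D` on `T¹ = KR_right(S,A)¹`, expressed on word
representatives.  With `k = ξ(u,v)` (and indexing the transition edges from `1` as in the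
paper, so that `E_k` sits at list index `k-1`):
`D(u,v) = ℓ` if `u = v` in `T¹`; `D(u,v) = 0` if `u ≠ v` in `T¹` and `k = 0`;
`D(u,v) = 2·h(end(E_k))` if `k > 0`, `E_{k+1}` and `E'_{k+1}` both exist and have the same
endpoint; and `D(u,v) = 2·h(end(E_k)) - 1` in all remaining cases. -/
noncomputable def lcD (θ : FreeMonoid A →* WithOne S) (u v : FreeMonoid A) : ℕ :=
  if KRrel θ u v then ell S
  else if xi θ u v = 0 then 0
  else
    let k := xi θ u v
    let base := (transEdges θ u)[k - 1]?.elim 0 fun e => height (edgeEnd θ e)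
    if ∃ e e', (transEdges θ u)[k]? = some e ∧ (transEdges θ v)[k]? = some e' ∧
        edgeEnd θ e = edgeEnd θ e'
    then 2 * base
    else 2 * base - 1

/-- The relation `∼` on `C = {(k,α) : 0 ≤ k ≤ ℓ, α ∈ T¹}`:
`(k,α) ∼ (k',β)` iff `k = k'` and `D(α,β) ≥ k`. -/
def simRel (θ : FreeMonoid A →* WithOne S)
    (p q : {p : ℕ × FreeMonoid A // p.1 ≤ ell S}) : Prop :=
  p.val.1 = q.val.1 ∧ lcD θ p.val.2 q.val.2 ≥ p.val.1

/-- The vertex set of the Chiswell tree: `∼`-classes `[k,α]`. -/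
def CVert (θ : FreeMonoid A →* WithOne S) : Type _ := Quot (simRel θ)

/-- The edge relation of the Chiswell graph: the edges are `[k,α] — [k+1,α]`
for `0 ≤ k < ℓ` and `α ∈ T¹`. -/
def edgeRel (θ : FreeMonoid A →* WithOne S) (v w : CVert θ) : Prop :=
  ∃ (k : ℕ) (α : FreeMonoid A) (hk : k + 1 ≤ ell S),
    v = Quot.mk (simRel θ) ⟨(k, α), Nat.le_of_succ_le hk⟩ ∧
    w = Quot.mk (simRel θ) ⟨(k + 1, α), hk⟩

/-- The Chiswell graph `𝒞`. -/
def CGraph (θ : FreeMonoid A →* WithOne S) : SimpleGraph (CVert θ) :=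
  SimpleGraph.fromRel (edgeRel θ)

/-- The depth function of the Chiswell tree: `δ([k,α]) = k`. -/
def depth (θ : FreeMonoid A →* WithOne S) : CVert θ → ℕ :=
  Quot.lift (fun p => p.val.1) (fun _ _ h => h.1)

end KRHolonomy
namespace KRHolonomy

section Aux

variable {A S : Type*} [Semigroup S]

private instance [Finite S] : Finite (WithOne S) := by
  have := Fintype.ofFinite S
  exact inferInstanceAs (Finite (Option S))

private lemma leJ_refl' {M : Type*} [Monoid M] (a : M) : leJ a a := ⟨1, 1, by simp⟩

private lemma leJ_trans' {M : Type*} [Monoid M] {a b c : M} (h1 : leJ a b) (h2 : leJ b c) :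
    leJ a c := by
  obtain ⟨x, y, rfl⟩ := h1; obtain ⟨x', y', rfl⟩ := h2
  exact ⟨x * x', y' * y, by simp [mul_assoc]⟩

private lemma leR_refl' {M : Type*} [Monoid M] (a : M) : leR a a := ⟨1, by simp⟩

private lemma leR_trans' {M : Type*} [Monoid M] {a b c : M} (h1 : leR a b) (h2 : leR b c) :
    leR a c := by
  obtain ⟨x, rfl⟩ := h1; obtain ⟨y, rfl⟩ := h2
  exact ⟨y * x, by simp [mul_assoc]⟩

private lemma leR_leJ {M : Type*} [Monoid M] {a b : M} (h : leR a b) : leJ a b := by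
  obtain ⟨x, rfl⟩ := h; exact ⟨1, x, by simp [mul_assoc]⟩

private lemma ltJ_of_ltJ_of_leJ {M : Type*} [Monoid M] {a b c : M} (h1 : ltJ a b)
    (h2 : leJ b c) : ltJ a c :=
  ⟨leJ_trans' h1.1 h2, fun h => h1.2 (leJ_trans' h2 h)⟩

private lemma ltJ_trans' {M : Type*} [Monoid M] {a b c : M} (h1 : ltJ a b) (h2 : ltJ b c) :
    ltJ a c := ltJ_of_ltJ_of_leJ h1 h2.1

private lemma ltJ_irrefl' {M : Type*} [Monoid M] (a : M) : ¬ ltJ a a := fun h => h.2 h.1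

/-- In a finite monoid every element has a positive idempotent power. -/
private lemma exists_idem_pow {M : Type*} [Monoid M] [Finite M] (x : M) :
    ∃ n, 0 < n ∧ x ^ n * x ^ n = x ^ n := by
  obtain ⟨a, b, hne, heq⟩ := Finite.exists_ne_map_eq_of_infinite (fun n : ℕ => x ^ n)
  wlog hab : a < b generalizing a b
  · exact this b a (Ne.symm hne) heq.symm (by omega)
  replace heq : x ^ a = x ^ b := heq
  set d := b - a with hd
  have hd1 : 1 ≤ d := by omega
  have key1 : ∀ j, a ≤ j → x ^ (j + d) = x ^ j := by
    intro j hj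
    have h1 : j + d = b + (j - a) := by omega
    have h2 : j = a + (j - a) := by omega
    rw [h1, pow_add, ← heq, ← pow_add, ← h2]
  have key : ∀ k j, a ≤ j → x ^ (j + k * d) = x ^ j := by
    intro k
    induction k with
    | zero => simp
    | succ k ih =>
      intro j hj
      have h1 : j + (k + 1) * d = (j + d) + k * d := by ring
      rw [h1, ih (j + d) (by omega), key1 j hj]
  refine ⟨d * (a + 1), by positivity, ?_⟩
  rw [← pow_add]
  have h1 : d * (a + 1) + d * (a + 1) = d * (a + 1) + (a + 1) * d := by ring
  rw [h1, key (a + 1) (d * (a + 1)) (by nlinarith)]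

private lemma theta_surj (θ : FreeMonoid A →* WithOne S)
    (hgen : ∀ s : S, ∃ u : FreeMonoid A, θ u = (s : WithOne S)) (x : WithOne S) :
    ∃ u : FreeMonoid A, θ u = x := by
  induction x using WithOne.recOneCoe with
  | one => exact ⟨1, map_one θ⟩
  | coe s => exact hgen s

/-- Stability: a transition edge strictly descends in the `J`-order. -/
private lemma isTransitionEdge_ltJ [Finite S] (θ : FreeMonoid A →* WithOne S)
    (hgen : ∀ s : S, ∃ u : FreeMonoid A, θ u = (s : WithOne S))
    {s : WithOne S} {a : A} (h : IsTransitionEdge θ s a) :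
    ltJ (s * θ (FreeMonoid.of a)) s := by
  constructor
  · exact ⟨1, θ (FreeMonoid.of a), by rw [one_mul]⟩
  · rintro ⟨x, y, hxy⟩
    set c := θ (FreeMonoid.of a) with hc
    have base : s = x * s * (c * y) := by
      conv_lhs => rw [hxy]
      simp [mul_assoc]
    have iter : ∀ n, s = x ^ n * s * (c * y) ^ n := by
      intro n
      induction n with
      | zero => simp
      | succ n ih =>
        calc s = x * s * (c * y) := base
          _ = x * (x ^ n * s * (c * y) ^ n) * (c * y) := by rw [← ih]
          _ = x ^ (n + 1) * s * (c * y) ^ (n + 1) := by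
              rw [pow_succ', pow_succ]
              simp [mul_assoc]
    obtain ⟨n, hn, hidem⟩ := exists_idem_pow x
    have hs : s = x ^ n * s * (c * y) ^ n := iter n
    have hes : x ^ n * s = s := by
      conv_lhs => rw [hs]
      rw [show x ^ n * (x ^ n * s * (c * y) ^ n) = (x ^ n * x ^ n) * s * (c * y) ^ n by
        simp [mul_assoc], hidem, ← hs]
    have hst : s = s * (c * y) ^ n := by
      conv_lhs => rw [hs]
      rw [hes]
    obtain ⟨q, hq⟩ := theta_surj θ hgen y
    apply h
    refine ⟨q * (FreeMonoid.of a * q) ^ (n - 1), ?_⟩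
    have hpow : (c * y) ^ n = c * (y * (c * y) ^ (n - 1)) := by
      conv_lhs => rw [show n = 1 + (n - 1) by omega]
      rw [pow_add, pow_one, mul_assoc]
    have hθ : θ (q * (FreeMonoid.of a * q) ^ (n - 1)) = y * (c * y) ^ (n - 1) := by
      rw [map_mul, map_pow, map_mul, hq, ← hc]
    rw [hθ, ← hc, mul_assoc, ← hpow, ← hst]

/-- A strict `<_J`-chain is strict between any two of its points. -/
private lemma chain_ltJ {M : Type*} [Monoid M] {c : ℕ → M} {k : ℕ}
    (hc : ∀ i < k, ltJ (c (i + 1)) (c i)) :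
    ∀ i j, i < j → j ≤ k → ltJ (c j) (c i) := by
  intro i j hij hjk
  induction j with
  | zero => omega
  | succ j ih =>
    rcases Nat.lt_or_ge i j with h | h
    · exact ltJ_trans' (hc j (by omega)) (ih h (by omega))
    · have hi : i = j := by omega
      subst hi
      exact hc i (by omega)

private lemma heightSet_bddAbove {M : Type*} [Monoid M] [Finite M] (x : M) :
    ∀ k ∈ {k | ∃ c : ℕ → M, c k = x ∧ ∀ i < k, ltJ (c (i + 1)) (c i)}, k ≤ Nat.card M := by
  rintro k ⟨c, hck, hc⟩
  have hinj : Function.Injective (fun i : Fin (k + 1) => c i.val) := by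
    intro i j hij
    simp only at hij
    rcases lt_trichotomy i.val j.val with h | h | h
    · have h2 := chain_ltJ hc i.val j.val h (by omega)
      rw [hij] at h2
      exact absurd h2 (ltJ_irrefl' _)
    · exact Fin.ext h
    · have h2 := chain_ltJ hc j.val i.val h (by omega)
      rw [← hij] at h2
      exact absurd h2 (ltJ_irrefl' _)
  have h2 := Nat.card_le_card_of_injective _ hinj
  simp only [Nat.card_eq_fintype_card, Fintype.card_fin] at h2
  omega

private lemma height_mem {M : Type*} [Monoid M] [Finite M] (x : M) :
    ∃ c : ℕ → M, c (height x) = x ∧ ∀ i < height x, ltJ (c (i + 1)) (c i) := by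
  have h : height x ∈ {k | ∃ c : ℕ → M, c k = x ∧ ∀ i < k, ltJ (c (i + 1)) (c i)} := by
    apply Nat.sSup_mem
    · exact ⟨0, fun _ => x, rfl, by omega⟩
    · exact ⟨Nat.card M, fun k hk => heightSet_bddAbove x k hk⟩
  exact h

private lemma height_succ_le {M : Type*} [Monoid M] [Finite M] {t s : M} (h : ltJ t s) :
    height s + 1 ≤ height t := by
  obtain ⟨c, hck, hc⟩ := height_mem s
  apply le_csSup ⟨Nat.card M, fun k hk => heightSet_bddAbove t k hk⟩
  refine ⟨fun i => if i ≤ height s then c i else t, ?_, ?_⟩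
  · simp
  · intro i hi
    show ltJ (if i + 1 ≤ height s then c (i + 1) else t) (if i ≤ height s then c i else t)
    rcases Nat.lt_or_ge i (height s) with h2 | h2
    · rw [if_pos (by omega : i + 1 ≤ height s), if_pos (by omega : i ≤ height s)]
      exact hc i h2
    · have hi2 : i = height s := by omega
      rw [if_neg (by omega : ¬ i + 1 ≤ height s), if_pos (by omega : i ≤ height s), hi2, hck]
      exact h

private lemma height_le_card {M : Type*} [Monoid M] [Finite M] (x : M) :
    height x ≤ Nat.card M :=
  csSup_le ⟨0, fun _ => x, rfl, by omega⟩ (heightSet_bddAbove x)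

private lemma two_height_le_ell [Finite S] (x : WithOne S) : 2 * height x ≤ ell S := by
  have h : height x ≤ sSup (Set.range fun s : WithOne S => height s) := by
    apply le_csSup
    · exact ⟨Nat.card (WithOne S), by rintro _ ⟨y, rfl⟩; exact height_le_card y⟩
    · exact ⟨x, rfl⟩
  unfold ell
  omega

private lemma transEdgesFrom_spec (θ : FreeMonoid A →* WithOne S) :
    ∀ (w : List A) (s : WithOne S) (e : WithOne S × A), e ∈ transEdgesFrom θ s w →
      IsTransitionEdge θ e.1 e.2 ∧ leR e.1 s := by
  intro w
  induction w with
  | nil => intro s e he; simp [transEdgesFrom] at he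
  | cons a w ih =>
    intro s e he
    rw [transEdgesFrom] at he
    rcases List.mem_append.1 he with h | h
    · by_cases hta : IsTransitionEdge θ s a
      · rw [if_pos hta] at h
        simp only [List.mem_singleton] at h
        subst h
        exact ⟨hta, leR_refl' s⟩
      · rw [if_neg hta] at h
        simp at h
    · obtain ⟨h1, h2⟩ := ih (s * θ (FreeMonoid.of a)) e h
      exact ⟨h1, leR_trans' h2 ⟨θ (FreeMonoid.of a), rfl⟩⟩

private lemma transEdgesFrom_pairwise (θ : FreeMonoid A →* WithOne S) :
    ∀ (w : List A) (s : WithOne S),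
      (transEdgesFrom θ s w).Pairwise (fun e f => leR f.1 (edgeEnd θ e)) := by
  intro w
  induction w with
  | nil => intro s; simp [transEdgesFrom]
  | cons a w ih =>
    intro s
    rw [transEdgesFrom]
    by_cases hta : IsTransitionEdge θ s a
    · rw [if_pos hta]
      simp only [List.singleton_append, List.pairwise_cons]
      refine ⟨fun f hf => ?_, ih _⟩
      exact (transEdgesFrom_spec θ w (s * θ (FreeMonoid.of a)) f hf).2
    · rw [if_neg hta]
      simpa using ih _

/-- Heights strictly increase along the sequence of transition edges. -/
private lemma transEdges_height_lt [Finite S] (θ : FreeMonoid A →* WithOne S)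
    (hgen : ∀ s : S, ∃ u : FreeMonoid A, θ u = (s : WithOne S)) (u : FreeMonoid A) {i j : ℕ}
    (hij : i < j) (hj : j < (transEdges θ u).length) :
    height (edgeEnd θ ((transEdges θ u)[i]'(lt_trans hij hj))) + 1 ≤
      height (edgeEnd θ ((transEdges θ u)[j])) := by
  have hpw := transEdgesFrom_pairwise θ (FreeMonoid.toList u) 1
  have hR : leR ((transEdges θ u)[j]).1 (edgeEnd θ ((transEdges θ u)[i]'(lt_trans hij hj))) :=
    List.pairwise_iff_getElem.mp hpw i j (lt_trans hij hj) hj hij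
  have hmem : (transEdges θ u)[j] ∈ transEdgesFrom θ 1 (FreeMonoid.toList u) :=
    List.getElem_mem hj
  have hT := (transEdgesFrom_spec θ (FreeMonoid.toList u) 1 _ hmem).1
  have hlt : ltJ (edgeEnd θ ((transEdges θ u)[j])) ((transEdges θ u)[j]).1 :=
    isTransitionEdge_ltJ θ hgen hT
  exact height_succ_le (ltJ_of_ltJ_of_leJ hlt (leR_leJ hR))

private lemma xi_spec (θ : FreeMonoid A →* WithOne S) (u v : FreeMonoid A) :
    xi θ u v ≤ (transEdges θ u).length ∧
      (transEdges θ u).take (xi θ u v) = (transEdges θ v).take (xi θ u v) := by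
  have h : xi θ u v ∈ {i | i ≤ (transEdges θ u).length ∧
      (transEdges θ u).take i = (transEdges θ v).take i} := by
    apply Nat.sSup_mem
    · exact ⟨0, by simp⟩
    · exact ⟨(transEdges θ u).length, fun k hk => hk.1⟩
  exact h

private lemma le_xi (θ : FreeMonoid A →* WithOne S) {u v : FreeMonoid A} {i : ℕ}
    (h1 : i ≤ (transEdges θ u).length)
    (h2 : (transEdges θ u).take i = (transEdges θ v).take i) : i ≤ xi θ u v :=
  le_csSup ⟨(transEdges θ u).length, fun k hk => hk.1⟩ ⟨h1, h2⟩

private lemma xi_le_len_right (θ : FreeMonoid A →* WithOne S) (u v : FreeMonoid A) :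
    xi θ u v ≤ (transEdges θ v).length := by
  have h1 := (xi_spec θ u v).1
  have h2 := congrArg List.length (xi_spec θ u v).2
  simp only [List.length_take] at h2
  omega

private lemma getElem?_eq_of_lt_xi (θ : FreeMonoid A →* WithOne S) {u v : FreeMonoid A} {j : ℕ}
    (hj : j < xi θ u v) :
    (transEdges θ u)[j]? = (transEdges θ v)[j]? := by
  have h := congrArg (fun l => l[j]?) (xi_spec θ u v).2
  simpa [List.getElem?_take_of_lt, hj] using h

private lemma take_eq_of_le {α : Type*} {l1 l2 : List α} {i j : ℕ} (hij : i ≤ j)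
    (h : l1.take j = l2.take j) : l1.take i = l2.take i := by
  have h2 := congrArg (List.take i) h
  simpa [List.take_take, Nat.min_eq_left hij] using h2

private lemma lcD_eq_ite (θ : FreeMonoid A →* WithOne S) {u v : FreeMonoid A}
    (h1 : ¬ KRrel θ u v) (h2 : ¬ xi θ u v = 0) :
    lcD θ u v =
      if ∃ e e', (transEdges θ u)[xi θ u v]? = some e ∧ (transEdges θ v)[xi θ u v]? = some e' ∧
          edgeEnd θ e = edgeEnd θ e'
      then 2 * ((transEdges θ u)[xi θ u v - 1]?.elim 0 fun e => height (edgeEnd θ e))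
      else 2 * ((transEdges θ u)[xi θ u v - 1]?.elim 0 fun e => height (edgeEnd θ e)) - 1 := by
  simp only [lcD, if_neg h1, if_neg h2]

private lemma lcD_spec (θ : FreeMonoid A →* WithOne S) {u v : FreeMonoid A} {e : WithOne S × A}
    (h1 : ¬ KRrel θ u v) (h2 : ¬ xi θ u v = 0)
    (he : (transEdges θ u)[xi θ u v - 1]? = some e) :
    lcD θ u v =
      if ∃ e e', (transEdges θ u)[xi θ u v]? = some e ∧ (transEdges θ v)[xi θ u v]? = some e' ∧
          edgeEnd θ e = edgeEnd θ e'
      then 2 * height (edgeEnd θ e)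
      else 2 * height (edgeEnd θ e) - 1 := by
  rw [lcD_eq_ite θ h1 h2, he]
  rfl

private lemma lcD_le_ell [Finite S] (θ : FreeMonoid A →* WithOne S) (u v : FreeMonoid A) :
    lcD θ u v ≤ ell S := by
  have hbase : 2 * ((transEdges θ u)[xi θ u v - 1]?.elim 0 fun e => height (edgeEnd θ e)) ≤
      ell S := by
    cases h : (transEdges θ u)[xi θ u v - 1]? with
    | none => simp [ell]
    | some e => simpa using two_height_le_ell (S := S) (edgeEnd θ e)
  by_cases h1 : KRrel θ u v
  · simp only [lcD, if_pos h1]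
    exact le_rfl
  by_cases h2 : xi θ u v = 0
  · simp only [lcD, if_neg h1, if_pos h2]
    exact Nat.zero_le _
  rw [lcD_eq_ite θ h1 h2]
  split <;> omega

private lemma transEdges_eq_of_KRrel (θ : FreeMonoid A →* WithOne S) {u v : FreeMonoid A}
    (h : KRrel θ u v) : transEdges θ u = transEdges θ v := by
  rcases h with ⟨h1, h2⟩ | ⟨_, _, _, h⟩
  · rw [h1, h2]
  · exact h

private lemma lcD_congr_left (θ : FreeMonoid A →* WithOne S) {α β : FreeMonoid A}
    (h : KRrel θ α β) (γ : FreeMonoid A) : lcD θ α γ = lcD θ β γ := by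
  rcases h with ⟨h1, h2⟩ | ⟨hα1, hβ1, hθ, ht⟩
  · rw [h1, h2]
  · have hiff : KRrel θ α γ ↔ KRrel θ β γ := by
      simp only [KRrel, hθ, ht]
      tauto
    have hx : xi θ α γ = xi θ β γ := by
      unfold xi
      rw [ht]
    unfold lcD
    rw [hx, ht]
    exact if_congr hiff rfl rfl

private lemma lcD_congr_right (θ : FreeMonoid A →* WithOne S) {β γ : FreeMonoid A}
    (h : KRrel θ β γ) (α : FreeMonoid A) : lcD θ α β = lcD θ α γ := by
  rcases h with ⟨h1, h2⟩ | ⟨hβ1, hγ1, hθ, ht⟩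
  · rw [h1, h2]
  · have hiff : KRrel θ α β ↔ KRrel θ α γ := by
      simp only [KRrel, hθ, ht]
      tauto
    have hx : xi θ α β = xi θ α γ := by
      unfold xi
      rw [ht]
    unfold lcD
    rw [hx, ht]
    exact if_congr hiff rfl rfl

private lemma heights_lt_of_getElem? [Finite S] (θ : FreeMonoid A →* WithOne S)
    (hgen : ∀ s : S, ∃ u : FreeMonoid A, θ u = (s : WithOne S)) (u : FreeMonoid A)
    {i j : ℕ} {e f : WithOne S × A} (hij : i < j)
    (he : (transEdges θ u)[i]? = some e) (hf : (transEdges θ u)[j]? = some f) :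
    height (edgeEnd θ e) + 1 ≤ height (edgeEnd θ f) := by
  obtain ⟨hj, hfe⟩ := List.getElem?_eq_some_iff.mp hf
  obtain ⟨hi, hee⟩ := List.getElem?_eq_some_iff.mp he
  have key := transEdges_height_lt θ hgen u hij hj
  rwa [hee, hfe] at key

end Aux

end KRHolonomy

open KRHolonomy in
/-- **isoperimetric inequality.** For all `α, β, γ ∈ T¹ = KR_right(S,A)¹`,
`D(α, γ) ≥ min(D(α, β), D(β, γ))`. -/
theorem lcD_isoperimetric {A S : Type*} [Finite A] [Semigroup S] [Finite S]
    (θ : FreeMonoid A →* WithOne S)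
    (hgen : ∀ s : S, ∃ u : FreeMonoid A, θ u = (s : WithOne S))
    (hproper : ∀ u : FreeMonoid A, θ u = 1 → u = 1)
    (α β γ : FreeMonoid A) :
    lcD θ α γ ≥ min (lcD θ α β) (lcD θ β γ) := by
  classical
  by_cases hab : KRrel θ α β
  · rw [lcD_congr_left θ hab γ]
    exact min_le_right _ _
  by_cases hbc : KRrel θ β γ
  · rw [← lcD_congr_right θ hbc α]
    exact min_le_left _ _
  by_cases hac : KRrel θ α γ
  · have h : lcD θ α γ = ell S := by simp only [lcD, if_pos hac]
    rw [h]
    exact le_trans (min_le_left _ _) (lcD_le_ell θ α β)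
  by_cases h1 : xi θ α β = 0
  · have h : lcD θ α β = 0 := by simp only [lcD, if_neg hab, if_pos h1]
    exact le_trans (le_trans (min_le_left _ _) (le_of_eq h)) (Nat.zero_le _)
  by_cases h2 : xi θ β γ = 0
  · have h : lcD θ β γ = 0 := by simp only [lcD, if_neg hbc, if_pos h2]
    exact le_trans (le_trans (min_le_right _ _) (le_of_eq h)) (Nat.zero_le _)
  have hk1a := (xi_spec θ α β).1
  have hta := (xi_spec θ α β).2
  have hk1b := xi_le_len_right θ α β
  have hk2b := (xi_spec θ β γ).1
  have htb := (xi_spec θ β γ).2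
  have hk2c := xi_le_len_right θ β γ
  have hk3a := (xi_spec θ α γ).1
  have htc := (xi_spec θ α γ).2
  have hk3c := xi_le_len_right θ α γ
  have hn1 : 0 < xi θ α β := Nat.pos_of_ne_zero h1
  have hn2 : 0 < xi θ β γ := Nat.pos_of_ne_zero h2
  have hmin : min (xi θ α β) (xi θ β γ) ≤ xi θ α γ := by
    refine le_xi θ (u := α) (v := γ) ?_ ?_
    · exact le_trans (min_le_left _ _) hk1a
    · calc (transEdges θ α).take (min (xi θ α β) (xi θ β γ))
          = (transEdges θ β).take (min (xi θ α β) (xi θ β γ)) :=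
            take_eq_of_le (min_le_left _ _) hta
        _ = (transEdges θ γ).take (min (xi θ α β) (xi θ β γ)) :=
            take_eq_of_le (min_le_right _ _) htb
  have h3 : ¬ xi θ α γ = 0 := by omega
  rcases lt_trichotomy (xi θ α β) (xi θ β γ) with hlt | heq | hgt
  · -- ξ(α,β) < ξ(β,γ)
    have hk3e : xi θ α γ = xi θ α β := by
      apply le_antisymm
      · by_contra hcon
        push_neg at hcon
        have h11 : xi θ α β + 1 ≤ xi θ α β := by
          refine le_xi θ (u := α) (v := β) ?_ ?_
          · omega
          · calc (transEdges θ α).take (xi θ α β + 1)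
                = (transEdges θ γ).take (xi θ α β + 1) := take_eq_of_le (by omega) htc
              _ = (transEdges θ β).take (xi θ α β + 1) :=
                  (take_eq_of_le (by omega) htb).symm
        omega
      · omega
    obtain ⟨e, hea⟩ : ∃ e, (transEdges θ α)[xi θ α β - 1]? = some e :=
      ⟨_, List.getElem?_eq_getElem (by omega)⟩
    have heb : (transEdges θ β)[xi θ α β - 1]? = some e := by
      rw [← getElem?_eq_of_lt_xi θ (by omega : xi θ α β - 1 < xi θ α β)]
      exact hea
    have Dab := lcD_spec θ hab h1 hea
    have Dac := lcD_spec θ hac h3 (e := e) (by rw [hk3e]; exact hea)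
    by_cases hcond : ∃ e e', (transEdges θ α)[xi θ α β]? = some e ∧
        (transEdges θ β)[xi θ α β]? = some e' ∧ edgeEnd θ e = edgeEnd θ e'
    · obtain ⟨p, p', hp, hp', hpe⟩ := hcond
      have hbc' : (transEdges θ β)[xi θ α β]? = (transEdges θ γ)[xi θ α β]? :=
        getElem?_eq_of_lt_xi θ (by omega : xi θ α β < xi θ β γ)
      have hcond3 : ∃ e e', (transEdges θ α)[xi θ α γ]? = some e ∧
          (transEdges θ γ)[xi θ α γ]? = some e' ∧ edgeEnd θ e = edgeEnd θ e' := by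
        refine ⟨p, p', ?_, ?_, hpe⟩
        · rw [hk3e]; exact hp
        · rw [hk3e, ← hbc']; exact hp'
      have hab_eq : lcD θ α β = 2 * height (edgeEnd θ e) := by
        rw [Dab, if_pos ⟨p, p', hp, hp', hpe⟩]
      have hac_eq : lcD θ α γ = 2 * height (edgeEnd θ e) := by rw [Dac, if_pos hcond3]
      omega
    · have hab_eq : lcD θ α β = 2 * height (edgeEnd θ e) - 1 := by rw [Dab, if_neg hcond]
      have hac_ge : 2 * height (edgeEnd θ e) - 1 ≤ lcD θ α γ := by rw [Dac]; split <;> omega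
      omega
  · -- ξ(α,β) = ξ(β,γ)
    obtain ⟨e, hea⟩ : ∃ e, (transEdges θ α)[xi θ α β - 1]? = some e :=
      ⟨_, List.getElem?_eq_getElem (by omega)⟩
    have heb : (transEdges θ β)[xi θ α β - 1]? = some e := by
      rw [← getElem?_eq_of_lt_xi θ (by omega : xi θ α β - 1 < xi θ α β)]
      exact hea
    have Dab := lcD_spec θ hab h1 hea
    have Dbc := lcD_spec θ hbc h2 (e := e) (by rw [← heq]; exact heb)
    rcases eq_or_lt_of_le (show xi θ α β ≤ xi θ α γ by omega) with h3e | h3e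
    · have Dac := lcD_spec θ hac h3 (e := e) (by rw [← h3e]; exact hea)
      by_cases hc1 : ∃ e e', (transEdges θ α)[xi θ α β]? = some e ∧
          (transEdges θ β)[xi θ α β]? = some e' ∧ edgeEnd θ e = edgeEnd θ e'
      · by_cases hc2 : ∃ e e', (transEdges θ β)[xi θ β γ]? = some e ∧
            (transEdges θ γ)[xi θ β γ]? = some e' ∧ edgeEnd θ e = edgeEnd θ e'
        · obtain ⟨p, p', hp, hp', hpe⟩ := hc1
          obtain ⟨q, q', hq, hq', hqe⟩ := hc2
          have hpq : p' = q := by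
            rw [← heq] at hq
            rw [hp'] at hq
            exact Option.some_inj.mp hq
          have hcond3 : ∃ e e', (transEdges θ α)[xi θ α γ]? = some e ∧
              (transEdges θ γ)[xi θ α γ]? = some e' ∧ edgeEnd θ e = edgeEnd θ e' := by
            refine ⟨p, q', ?_, ?_, ?_⟩
            · rw [← h3e]; exact hp
            · rw [← h3e, heq]; exact hq'
            · rw [hpe, hpq, hqe]
          have hab_eq : lcD θ α β = 2 * height (edgeEnd θ e) := by
            rw [Dab, if_pos ⟨p, p', hp, hp', hpe⟩]
          have hac_eq : lcD θ α γ = 2 * height (edgeEnd θ e) := by rw [Dac, if_pos hcond3]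
          omega
        · have hbc_eq : lcD θ β γ = 2 * height (edgeEnd θ e) - 1 := by rw [Dbc, if_neg hc2]
          have hac_ge : 2 * height (edgeEnd θ e) - 1 ≤ lcD θ α γ := by
            rw [Dac]; split <;> omega
          omega
      · have hab_eq : lcD θ α β = 2 * height (edgeEnd θ e) - 1 := by rw [Dab, if_neg hc1]
        have hac_ge : 2 * height (edgeEnd θ e) - 1 ≤ lcD θ α γ := by
          rw [Dac]; split <;> omega
        omega
    · obtain ⟨f, hfa⟩ : ∃ f, (transEdges θ α)[xi θ α γ - 1]? = some f :=
        ⟨_, List.getElem?_eq_getElem (by omega)⟩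
      have Dac := lcD_spec θ hac h3 hfa
      have hht : height (edgeEnd θ e) + 1 ≤ height (edgeEnd θ f) :=
        heights_lt_of_getElem? θ hgen α (by omega) hea hfa
      have hab_le : lcD θ α β ≤ 2 * height (edgeEnd θ e) := by rw [Dab]; split <;> omega
      have hac_ge : 2 * height (edgeEnd θ f) - 1 ≤ lcD θ α γ := by rw [Dac]; split <;> omega
      omega
  · -- ξ(β,γ) < ξ(α,β)
    have hk3e : xi θ α γ = xi θ β γ := by
      apply le_antisymm
      · by_contra hcon
        push_neg at hcon
        have h11 : xi θ β γ + 1 ≤ xi θ β γ := by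
          refine le_xi θ (u := β) (v := γ) ?_ ?_
          · omega
          · calc (transEdges θ β).take (xi θ β γ + 1)
                = (transEdges θ α).take (xi θ β γ + 1) := (take_eq_of_le (by omega) hta).symm
              _ = (transEdges θ γ).take (xi θ β γ + 1) := take_eq_of_le (by omega) htc
        omega
      · omega
    obtain ⟨e, heb⟩ : ∃ e, (transEdges θ β)[xi θ β γ - 1]? = some e :=
      ⟨_, List.getElem?_eq_getElem (by omega)⟩
    have hea : (transEdges θ α)[xi θ β γ - 1]? = some e := by
      rw [getElem?_eq_of_lt_xi θ (by omega : xi θ β γ - 1 < xi θ α β)]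
      exact heb
    have Dbc := lcD_spec θ hbc h2 heb
    have Dac := lcD_spec θ hac h3 (e := e) (by rw [hk3e]; exact hea)
    by_cases hcond : ∃ e e', (transEdges θ β)[xi θ β γ]? = some e ∧
        (transEdges θ γ)[xi θ β γ]? = some e' ∧ edgeEnd θ e = edgeEnd θ e'
    · obtain ⟨p, p', hp, hp', hpe⟩ := hcond
      have hab' : (transEdges θ α)[xi θ β γ]? = (transEdges θ β)[xi θ β γ]? :=
        getElem?_eq_of_lt_xi θ (by omega : xi θ β γ < xi θ α β)
      have hcond3 : ∃ e e', (transEdges θ α)[xi θ α γ]? = some e ∧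
          (transEdges θ γ)[xi θ α γ]? = some e' ∧ edgeEnd θ e = edgeEnd θ e' := by
        refine ⟨p, p', ?_, ?_, hpe⟩
        · rw [hk3e, hab']; exact hp
        · rw [hk3e]; exact hp'
      have hbc_eq : lcD θ β γ = 2 * height (edgeEnd θ e) := by
        rw [Dbc, if_pos ⟨p, p', hp, hp', hpe⟩]
      have hac_eq : lcD θ α γ = 2 * height (edgeEnd θ e) := by rw [Dac, if_pos hcond3]
      omega
    · have hbc_eq : lcD θ β γ = 2 * height (edgeEnd θ e) - 1 := by rw [Dbc, if_neg hcond]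
      have hac_ge : 2 * height (edgeEnd θ e) - 1 ≤ lcD θ α γ := by rw [Dac]; split <;> omega
      omega
end

section
/- Let T^1 = KR_right(S,A)^1 for a finite semigroup S generated by a finite alphabet A, and let 𝒞 be the Chiswell graph built from the Lyndon–Chiswell length function D on T^1. Then (𝒞, [0,1]) is a rooted tree: 𝒞 is connected and admits no cycles. -/
open scoped Classical

namespace KRHolonomy

variable {A S : Type*} [Semigroup S]

/-- The parent map of the Chiswell graph: `[k,α] ↦ [k-1,α]`. -/
noncomputable def parent (θ : FreeMonoid A →* WithOne S) : CVert θ → CVert θ :=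
  Quot.lift
    (fun p => Quot.mk (simRel θ) ⟨(p.val.1 - 1, p.val.2), le_trans (Nat.sub_le _ _) p.2⟩)
    (fun p q h => Quot.sound ⟨congrArg (· - 1) h.1, le_trans (Nat.sub_le _ _) h.2⟩)

lemma adj_cases (θ : FreeMonoid A →* WithOne S) {v w : CVert θ}
    (h : (CGraph θ).Adj v w) :
    (v = parent θ w ∧ depth θ w = depth θ v + 1) ∨
    (w = parent θ v ∧ depth θ v = depth θ w + 1) := by
  rw [CGraph, SimpleGraph.fromRel_adj] at h
  rcases h.2 with he | he
  · obtain ⟨k, α, hk, rfl, rfl⟩ := he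
    exact Or.inl ⟨rfl, rfl⟩
  · obtain ⟨k, α, hk, rfl, rfl⟩ := he
    exact Or.inr ⟨rfl, rfl⟩

lemma no_max_cycle (θ : FreeMonoid A →* WithOne S) {m : CVert θ}
    (c : (CGraph θ).Walk m m) (hc : c.IsCycle)
    (hmax : ∀ x ∈ c.support, depth θ x ≤ depth θ m) : False := by
  have h3 : 3 ≤ c.length := hc.three_le_length
  obtain ⟨v, h1, q, hq⟩ := (SimpleGraph.Walk.not_nil_iff).1 hc.not_nil
  have hrnil : ¬ c.reverse.Nil := by
    rw [SimpleGraph.Walk.nil_iff_length_eq, SimpleGraph.Walk.length_reverse]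
    omega
  obtain ⟨w, h2, q', hq'⟩ := (SimpleGraph.Walk.not_nil_iff).1 hrnil
  have hv : v = parent θ m := by
    rcases adj_cases θ h1 with ⟨h, hd⟩ | ⟨h, hd⟩
    · exfalso
      have hvm : v ∈ c.support := by
        rw [hq]; exact List.mem_cons_of_mem _ q.start_mem_support
      have := hmax v hvm; omega
    · exact h
  have hw : w = parent θ m := by
    rcases adj_cases θ h2 with ⟨h, hd⟩ | ⟨h, hd⟩
    · exfalso
      have hwm : w ∈ c.support := by
        have : w ∈ c.reverse.support := by
          rw [hq']; exact List.mem_cons_of_mem _ q'.start_mem_support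
        rwa [SimpleGraph.Walk.support_reverse, List.mem_reverse] at this
      have := hmax w hwm; omega
    · exact h
  have hvw : w = v := hw.trans hv.symm
  subst hvw
  have e1 : c.edges = s(m, w) :: q.edges := by rw [hq]; rfl
  have e2 : c.edges.reverse = s(m, w) :: q'.edges := by
    rw [← SimpleGraph.Walk.edges_reverse, hq']; rfl
  have hsplit : c.edges = q'.edges.reverse ++ [s(m, w)] := by
    have h' := congrArg List.reverse e2
    simpa using h'
  have hlen : c.edges.length = c.length := SimpleGraph.Walk.length_edges c
  have hne : q'.edges.reverse ≠ [] := by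
    intro h
    rw [h, List.nil_append] at hsplit
    rw [hsplit] at hlen
    simp at hlen; omega
  obtain ⟨b, t, hbt⟩ := List.exists_cons_of_ne_nil hne
  rw [hbt, List.cons_append, e1] at hsplit
  have hb : s(m, w) = b := (List.cons_eq_cons.1 hsplit).1
  have ht : q.edges = t ++ [s(m, w)] := (List.cons_eq_cons.1 hsplit).2
  have hmem : s(m, w) ∈ q.edges := by
    rw [ht]; exact List.mem_append_right _ (List.mem_singleton_self _)
  have hnd : c.edges.Nodup := hc.edges_nodup
  rw [e1, List.nodup_cons] at hnd
  exact hnd.1 hmem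

lemma chiswell_acyclic (θ : FreeMonoid A →* WithOne S) : (CGraph θ).IsAcyclic := by
  intro u c hc
  have hne : c.support ≠ [] := c.support_ne_nil
  obtain ⟨m, hm⟩ : ∃ m, m ∈ c.support.argmax (depth θ) := by
    cases h : c.support.argmax (depth θ) with
    | none => exact absurd (List.argmax_eq_none.1 h) hne
    | some m => exact ⟨m, rfl⟩
  have hmmem : m ∈ c.support := List.argmax_mem hm
  have hmax : ∀ a ∈ c.support, depth θ a ≤ depth θ m :=
    fun a ha => List.le_of_mem_argmax ha hm
  have hc' := hc.rotate hmmem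
  refine no_max_cycle θ (c.rotate m hmmem) hc' ?_
  intro x hx
  rw [SimpleGraph.Walk.support_eq_cons] at hx
  rcases List.mem_cons.1 hx with rfl | hx
  · exact hmax _ hmmem
  · have hrot := SimpleGraph.Walk.support_rotate c m hmmem
    have hx' : x ∈ c.support.tail := hrot.mem_iff.1 hx
    refine hmax _ ?_
    rw [SimpleGraph.Walk.support_eq_cons c]
    exact List.mem_cons_of_mem _ hx'

lemma reach (θ : FreeMonoid A →* WithOne S) (α : FreeMonoid A) :
    ∀ (k : ℕ) (hk : k ≤ ell S),
      (CGraph θ).Reachable (Quot.mk (simRel θ) ⟨(k, α), hk⟩)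
        (Quot.mk (simRel θ) ⟨(0, α), Nat.zero_le _⟩) := by
  intro k
  induction k with
  | zero => intro hk; exact SimpleGraph.Reachable.refl _
  | succ n ih =>
    intro hk
    have hn : n ≤ ell S := Nat.le_of_succ_le hk
    have hadj : (CGraph θ).Adj (Quot.mk (simRel θ) ⟨(n + 1, α), hk⟩)
        (Quot.mk (simRel θ) ⟨(n, α), hn⟩) := by
      refine (SimpleGraph.fromRel_adj (edgeRel θ) _ _).2 ?_
      refine ⟨?_, Or.inr ⟨n, α, hk, rfl, rfl⟩⟩
      intro h
      have h' : n + 1 = n := congrArg (depth θ) h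
      omega
    exact hadj.reachable.trans (ih hn)

lemma chiswell_preconnected (θ : FreeMonoid A →* WithOne S) :
    (CGraph θ).Preconnected := by
  intro v w
  induction v using Quot.ind with
  | _ p =>
    induction w using Quot.ind with
    | _ q =>
      have h1 := reach θ p.val.2 p.val.1 p.2
      have h2 := reach θ q.val.2 q.val.1 q.2
      have hroot : Quot.mk (simRel θ) ⟨(0, p.val.2), Nat.zero_le _⟩ =
          Quot.mk (simRel θ) ⟨(0, q.val.2), Nat.zero_le _⟩ :=
        Quot.sound ⟨rfl, Nat.zero_le _⟩
      exact (h1.trans (hroot ▸ SimpleGraph.Reachable.refl _)).trans h2.symm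

end KRHolonomy

open KRHolonomy in
/-- The Chiswell graph `𝒞` (with root `[0,1]`) is a tree: it is connected
and admits no cycles. -/
theorem chiswell_isTree {A S : Type*} [Finite A] [Semigroup S] [Finite S]
    (θ : FreeMonoid A →* WithOne S)
    (hgen : ∀ s : S, ∃ u : FreeMonoid A, θ u = (s : WithOne S))
    (hproper : ∀ u : FreeMonoid A, θ u = 1 → u = 1) :
    (CGraph θ).IsTree := by
  have : Nonempty (CVert θ) := ⟨Quot.mk _ ⟨(0, 1), Nat.zero_le _⟩⟩
  exact ⟨⟨chiswell_preconnected θ⟩, chiswell_acyclic θ⟩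
end
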